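/- If E[X'Λ_s^{-1}X] is positive definite for each s, then the Gaussian model p_θ(y | w, s) = N(y | Xφ_s, Λ_s) is identifiable: θ_1 ≠ θ_2 implies that for some s the conditional densities p_{θ_1}(· | w, s) and p_{θ_2}(· | w, s) differ on a set of positive probability. -/

import Mathlib

open Matrix MeasureTheory

/-- Identifiability of the Gaussian model: if E[X'Λ_s⁻¹X] is positive definite for each
cohort s (for both parameter values), then distinct parameters θ₁ ≠ θ₂ yield, for some s,
conditional Gaussian distributions N(X(w)φ_s, Λ_s) that differ on a set of covariates w of
positive probability. Here `N` is the map sending a mean vector and covariance matrix to the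
corresponding multivariate Gaussian distribution; two such Gaussians coincide iff their means
and covariances coincide. -/
theorem stmt11 {W : Type*} [MeasurableSpace W] (g : Measure W) [IsProbabilityMeasure g]
    (T p : ℕ) (S : Finset ℕ)
    (N : (Fin T → ℝ) → Matrix (Fin T) (Fin T) ℝ → Measure (Fin T → ℝ))
    (hN : ∀ (μ1 μ2 : Fin T → ℝ) (Λ1 Λ2 : Matrix (Fin T) (Fin T) ℝ),
      N μ1 Λ1 = N μ2 Λ2 ↔ (μ1 = μ2 ∧ Λ1 = Λ2))
    (X : W → Matrix (Fin T) (Fin p) ℝ)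
    (hXm : ∀ i j, Measurable fun w => X w i j)
    (φ1 φ2 : ℕ → Fin p → ℝ) (Λ1 Λ2 : ℕ → Matrix (Fin T) (Fin T) ℝ)
    (hΛpd : ∀ s ∈ S, (Λ1 s).PosDef ∧ (Λ2 s).PosDef)
    (hint : ∀ s ∈ S, ∀ Λ ∈ ({Λ1 s, Λ2 s} : Set (Matrix (Fin T) (Fin T) ℝ)),
      ∀ i j, Integrable (fun w => ((X w)ᵀ * Λ⁻¹ * X w) i j) g)
    (hpd : ∀ s ∈ S, ∀ Λ ∈ ({Λ1 s, Λ2 s} : Set (Matrix (Fin T) (Fin T) ℝ)),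
      (Matrix.of fun i j => ∫ w, ((X w)ᵀ * Λ⁻¹ * X w) i j ∂g).PosDef)
    (hθ : ¬ (∀ s ∈ S, φ1 s = φ2 s ∧ Λ1 s = Λ2 s)) :
    ∃ s ∈ S,
      0 < g {w | N ((X w).mulVec (φ1 s)) (Λ1 s) ≠ N ((X w).mulVec (φ2 s)) (Λ2 s)} := by

  push_neg at hθ
  obtain ⟨s, hs, hne⟩ := hθ
  refine ⟨s, hs, ?_⟩
  rw [pos_iff_ne_zero]
  intro h0
  have hae : ∀ᵐ w ∂g, N ((X w).mulVec (φ1 s)) (Λ1 s) = N ((X w).mulVec (φ2 s)) (Λ2 s) :=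
    ae_iff.mpr h0
  have hΛ : Λ1 s = Λ2 s := by
    obtain ⟨w, hw⟩ := hae.exists
    exact ((hN _ _ _ _).mp hw).2
  have hφ : φ1 s ≠ φ2 s := fun h => hne h hΛ
  set v : Fin p → ℝ := φ1 s - φ2 s with hv
  have hvne : v ≠ 0 := sub_ne_zero.mpr hφ
  have haeX : ∀ᵐ w ∂g, (X w).mulVec v = 0 := by
    filter_upwards [hae] with w hw
    have hμ := ((hN _ _ _ _).mp hw).1
    simp [hv, Matrix.mulVec_sub, hμ]
  have hpds := hpd s hs (Λ1 s) (Or.inl rfl)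
  have hint' := hint s hs (Λ1 s) (Or.inl rfl)
  have key := hpds.dotProduct_mulVec_pos hvne
  have hzero : star v ⬝ᵥ (Matrix.of fun i j => ∫ w, ((X w)ᵀ * (Λ1 s)⁻¹ * X w) i j ∂g) *ᵥ v = 0 := by
    have expand : ∀ (M : Matrix (Fin p) (Fin p) ℝ),
        star v ⬝ᵥ M *ᵥ v = ∑ i, ∑ j, v i * (M i j * v j) := by
      intro M
      simp [dotProduct, Matrix.mulVec, Finset.mul_sum]
    rw [expand]
    have step : ∀ i j, v i * ((∫ w, ((X w)ᵀ * (Λ1 s)⁻¹ * X w) i j ∂g) * v j)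
        = ∫ w, v i * (((X w)ᵀ * (Λ1 s)⁻¹ * X w) i j * v j) ∂g := by
      intro i j
      rw [← integral_mul_const, ← integral_const_mul]
    simp only [Matrix.of_apply]
    rw [Finset.sum_congr rfl fun i _ => Finset.sum_congr rfl fun j _ => step i j]
    have hint2 : ∀ i ∈ Finset.univ, ∀ j ∈ (Finset.univ : Finset (Fin p)),
        Integrable (fun w => v i * (((X w)ᵀ * (Λ1 s)⁻¹ * X w) i j * v j)) g := by
      intro i _ j _
      exact (((hint' i j).mul_const (v j)).const_mul (v i))
    rw [Finset.sum_congr rfl fun i _ =>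
        (integral_finset_sum _ fun j hj => hint2 i (Finset.mem_univ i) j hj).symm,
      ← integral_finset_sum _ (fun i _ => integrable_finset_sum _ (hint2 i (Finset.mem_univ i)))]
    · have : ∀ᵐ w ∂g, (∑ i, ∑ j, v i * (((X w)ᵀ * (Λ1 s)⁻¹ * X w) i j * v j)) = 0 := by
        filter_upwards [haeX] with w hw
        have : star v ⬝ᵥ ((X w)ᵀ * (Λ1 s)⁻¹ * X w) *ᵥ v = 0 := by
          rw [← Matrix.mulVec_mulVec, ← Matrix.mulVec_mulVec, hw]
          simp
        rw [← expand ((X w)ᵀ * (Λ1 s)⁻¹ * X w)]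
        exact this
      rw [integral_congr_ae this, integral_zero]
  rw [hzero] at key
  exact lt_irrefl 0 key
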